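/- Let m be a positive integer and θ, φ, γ : Fin m → ℝ. Let E = blockdiag_j(R_{Z12}(π)) (a 3m×3m matrix, where R_{Z12}(π) = diag(1,−1,−1)) and let I denote the 3m×3m identity. Then with a = X02: diag₃(D_a(θ), D_a(θ), D_a(θ)) · diag₃(I, E, I) · diag₃(D_a(φ), D_a(φ), D_a(φ)) · diag₃(I, E, I) · diag₃(I, I, E) · diag₃(D_a(γ), D_a(γ), D_a(γ)) · diag₃(I, I, E) = diag₃(D_a(θ+φ+γ), D_a(θ−φ+γ), D_a(θ+φ−γ)), where θ±φ±γ denotes the componentwise combination of the angle families. -/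

import Mathlib

open Matrix

/-- `e^{ι x}` for a real angle `x`. -/
noncomputable def eC (x : ℝ) : ℂ := Complex.exp (x * Complex.I)

noncomputable def RX01 (θ : ℝ) : Matrix (Fin 3) (Fin 3) ℂ :=
  !![(Real.cos θ : ℂ), (Real.sin θ : ℂ) * Complex.I, 0;
     (Real.sin θ : ℂ) * Complex.I, (Real.cos θ : ℂ), 0;
     0, 0, 1]

noncomputable def RX12 (θ : ℝ) : Matrix (Fin 3) (Fin 3) ℂ :=
  !![1, 0, 0;
     0, (Real.cos θ : ℂ), (Real.sin θ : ℂ) * Complex.I;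
     0, (Real.sin θ : ℂ) * Complex.I, (Real.cos θ : ℂ)]

noncomputable def RX02 (θ : ℝ) : Matrix (Fin 3) (Fin 3) ℂ :=
  !![(Real.cos θ : ℂ), 0, (Real.sin θ : ℂ) * Complex.I;
     0, 1, 0;
     (Real.sin θ : ℂ) * Complex.I, 0, (Real.cos θ : ℂ)]

noncomputable def RY01 (θ : ℝ) : Matrix (Fin 3) (Fin 3) ℂ :=
  !![(Real.cos θ : ℂ), (Real.sin θ : ℂ), 0;
     (-Real.sin θ : ℂ), (Real.cos θ : ℂ), 0;
     0, 0, 1]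

noncomputable def RY12 (θ : ℝ) : Matrix (Fin 3) (Fin 3) ℂ :=
  !![1, 0, 0;
     0, (Real.cos θ : ℂ), (Real.sin θ : ℂ);
     0, (-Real.sin θ : ℂ), (Real.cos θ : ℂ)]

noncomputable def RY02 (θ : ℝ) : Matrix (Fin 3) (Fin 3) ℂ :=
  !![(Real.cos θ : ℂ), 0, (Real.sin θ : ℂ);
     0, 1, 0;
     (-Real.sin θ : ℂ), 0, (Real.cos θ : ℂ)]

noncomputable def RZ01 (θ : ℝ) : Matrix (Fin 3) (Fin 3) ℂ :=
  !![eC θ, 0, 0; 0, eC (-θ), 0; 0, 0, 1]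

noncomputable def RZ12 (θ : ℝ) : Matrix (Fin 3) (Fin 3) ℂ :=
  !![1, 0, 0; 0, eC θ, 0; 0, 0, eC (-θ)]

noncomputable def RZ02 (θ : ℝ)  : Matrix (Fin 3) (Fin 3) ℂ :=
  !![eC θ, 0, 0; 0, 1, 0; 0, 0, eC (-θ)]

/-- Block diagonal matrix built from a one-qutrit gate family `R` applied to angles `α`. -/
noncomputable def D {m : ℕ} (R : ℝ → Matrix (Fin 3) (Fin 3) ℂ) (α : Fin m → ℝ) :
    Matrix (Fin 3 × Fin m) (Fin 3 × Fin m) ℂ :=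
  Matrix.blockDiagonal fun j => R (α j)

/-- Block diagonal matrix with three equal-size diagonal blocks. -/
noncomputable def diag3 {I : Type*} [DecidableEq I] (A B C : Matrix I I ℂ) :
    Matrix (I × Fin 3) (I × Fin 3) ℂ :=
  Matrix.blockDiagonal ![A, B, C]


lemma RX02_mul (a b : ℝ) : RX02 a * RX02 b = RX02 (a + b) := by
  ext i j
  fin_cases i <;> fin_cases j <;>
    simp [RX02, Matrix.mul_apply, Fin.sum_univ_three, Real.cos_add, Real.sin_add] <;>
    ring_nf <;> simp [Complex.I_sq] <;> try ring

lemma E_conj (a : ℝ) : RZ12 Real.pi * RX02 a * RZ12 Real.pi = RX02 (-a) := by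
  have h1 : eC Real.pi = -1 := by simp [eC, Complex.exp_pi_mul_I]
  have h2 : eC (-Real.pi) = -1 := by
    unfold eC
    push_cast
    rw [show -(Real.pi : ℂ) * Complex.I = -(Real.pi * Complex.I) by ring,
      Complex.exp_neg, Complex.exp_pi_mul_I]
    norm_num
  have hE : RZ12 Real.pi = !![1,0,0;0,-1,0;0,0,-1] := by
    unfold RZ12; rw [h1, h2]
  rw [hE]
  ext i j
  fin_cases i <;> fin_cases j <;>
    simp [RX02, Matrix.mul_apply, Fin.sum_univ_three, Real.sin_neg, Real.cos_neg,
      -mul_eq_mul_right_iff, -mul_eq_mul_left_iff, -mul_eq_zero, Matrix.vecHead,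
      Matrix.vecTail] <;> try ring

theorem stmt11 (m : ℕ) (hm : 0 < m) (θ φ γ : Fin m → ℝ) :
    let E : Matrix (Fin 3 × Fin m) (Fin 3 × Fin m) ℂ :=
      Matrix.blockDiagonal fun _ : Fin m => RZ12 Real.pi
    let I : Matrix (Fin 3 × Fin m) (Fin 3 × Fin m) ℂ := 1
    diag3 (D RX02 θ) (D RX02 θ) (D RX02 θ) * diag3 I E I *
      diag3 (D RX02 φ) (D RX02 φ) (D RX02 φ) * diag3 I E I * diag3 I I E *
      diag3 (D RX02 γ) (D RX02 γ) (D RX02 γ) * diag3 I I E =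
      diag3 (D RX02 (fun j => θ j + φ j + γ j)) (D RX02 (fun j => θ j - φ j + γ j))
        (D RX02 (fun j => θ j + φ j - γ j)) := by
  intro E I
  have hI : I = Matrix.blockDiagonal (fun _ : Fin m => (1 : Matrix (Fin 3) (Fin 3) ℂ)) :=
    Matrix.blockDiagonal_one.symm
  simp only [diag3, D, hI, E, ← Matrix.blockDiagonal_mul]
  refine congrArg Matrix.blockDiagonal (funext fun k => ?_)
  fin_cases k
  · simp only [Fin.zero_eta, Matrix.cons_val_zero, ← Matrix.blockDiagonal_mul]
    refine congrArg Matrix.blockDiagonal (funext fun j => ?_)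
    simp only [mul_one, one_mul]
    rw [RX02_mul, RX02_mul]
  · simp only [Fin.mk_one, Matrix.cons_val_one, Matrix.head_cons, Matrix.cons_val_zero,
      ← Matrix.blockDiagonal_mul]
    refine congrArg Matrix.blockDiagonal (funext fun j => ?_)
    simp only [mul_one, one_mul]
    calc RX02 (θ j) * RZ12 Real.pi * RX02 (φ j) * RZ12 Real.pi * RX02 (γ j)
        = RX02 (θ j) * (RZ12 Real.pi * RX02 (φ j) * RZ12 Real.pi) * RX02 (γ j) := by
          noncomm_ring
      _ = RX02 (θ j - φ j + γ j) := by
          rw [E_conj, RX02_mul, RX02_mul, sub_eq_add_neg]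
  · simp only [Fin.reduceFinMk, Matrix.cons_val_two, Matrix.tail_cons, Matrix.head_cons,
      ← Matrix.blockDiagonal_mul]
    refine congrArg Matrix.blockDiagonal (funext fun j => ?_)
    simp only [mul_one, one_mul]
    calc RX02 (θ j) * RX02 (φ j) * RZ12 Real.pi * RX02 (γ j) * RZ12 Real.pi
        = RX02 (θ j) * RX02 (φ j) * (RZ12 Real.pi * RX02 (γ j) * RZ12 Real.pi) := by
          noncomm_ring
      _ = RX02 (θ j + φ j - γ j) := by
          rw [E_conj, RX02_mul, RX02_mul, sub_eq_add_neg]
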